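/- The number of walks of length n on the nonnegative integers starting at 0, where from position k the allowed steps are to any of 0,1,...,k-1, to k, or to k+1 with multiplicity 2 (i.e., two distinguishable steps to k+1), equals the large Schröder number, with generating function F(z) = (1 - 3z - √(1 - 6z + z²))/(4z²). -/

import Mathlib

open PowerSeries

private lemma z1 (A E : PowerSeries ℚ) (n : ℕ) (h : ∀ m, m ≤ n → coeff m E = 0) :
    coeff n (A * E) = 0 := by
  rw [coeff_mul]
  refine Finset.sum_eq_zero fun p hp => ?_
  rw [Finset.HasAntidiagonal.mem_antidiagonal] at hp
  rw [h p.2 (by omega), mul_zero]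

private lemma z2 {A B : PowerSeries ℚ} {j n : ℕ} (hAB : A = X ^ j * B) (h : n < j) :
    coeff n A = 0 := by
  subst hAB
  exact (PowerSeries.X_pow_dvd_iff.mp (dvd_mul_right _ _)) n h

private lemma coeff_two_mul' (n : ℕ) (A : PowerSeries ℚ) :
    coeff n (2 * A) = 2 * coeff n A := by
  rw [two_mul, map_add, two_mul]

private lemma geom_Icc (G : PowerSeries ℚ) (k : ℕ) :
    ∀ n, k ≤ n → (∑ j ∈ Finset.Icc k n, G ^ j) * (1 - G) = G ^ k - G ^ (n + 1) := by
  refine Nat.le_induction ?_ ?_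
  · simp [Finset.Icc_self]; ring
  · intro n hkn ih
    rw [Finset.sum_Icc_succ_top (by omega), add_mul, ih]
    ring

theorem stmt_6 (c : ℕ → ℕ → ℕ)
    (h0 : ∀ k, c 0 k = if k = 0 then 1 else 0)
    (hbound : ∀ n k, n < k → c n k = 0)
    (hstep : ∀ n k, c (n + 1) k =
      (if 1 ≤ k then 2 * c n (k - 1) else 0) + c n k + ∑ j ∈ Finset.Ioc k n, c n j)
    (f : ℕ → ℕ) (hf : ∀ n, f n = ∑ k ∈ Finset.range (n + 1), c n k)
    (F : PowerSeries ℚ) (hF : F = mk fun n => (f n : ℚ)) :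
    ∃ S : PowerSeries ℚ, S ^ 2 = 1 - 6 * X + X ^ 2 ∧ constantCoeff (R := ℚ) S = 1 ∧
      4 * X ^ 2 * F = 1 - 3 * X - S := by
  classical
  set G : PowerSeries ℚ := 2 * X + 2 * X ^ 2 * F with hG
  set E : PowerSeries ℚ := F - 3 * X * F - 2 * X ^ 2 * F ^ 2 - 1 with hE
  have hcoeffF : ∀ n, coeff n F = (f n : ℚ) := by
    intro n; rw [hF, coeff_mk]
  have hf0 : f 0 = 1 := by
    rw [hf]; simp [h0]
  have hconstF : constantCoeff (R := ℚ) F = 1 := by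
    rw [← coeff_zero_eq_constantCoeff, hcoeffF 0, hf0, Nat.cast_one]
  have sumfac : ∀ (s : Finset ℕ), ∑ x ∈ s, F * G ^ x * (1 - G) =
      F * (∑ x ∈ s, G ^ x) * (1 - G) := by
    intro s
    rw [Finset.mul_sum, Finset.sum_mul]
  have hGX : ∀ (m : ℕ) (W : PowerSeries ℚ),
      F * G ^ m * W = X ^ m * ((2 + 2 * X * F) ^ m * F * W) := by
    intro m W
    rw [hG, show (2 : ℚ⟦X⟧) * X + 2 * X ^ 2 * F = X * (2 + 2 * X * F) by ring, mul_pow]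
    ring
  have hzF : ∀ (m n : ℕ) (W : PowerSeries ℚ), n < m → coeff n (F * G ^ m * W) = 0 :=
    fun m n W h => z2 (hGX m W) h
  have hzF' : ∀ (m n : ℕ), n < m → coeff n (F * G ^ m) = 0 := by
    intro m n h
    have := hzF m n 1 h
    rwa [mul_one] at this
  have icc : ∀ n k, (c n k + ∑ j ∈ Finset.Ioc k n, c n j) = ∑ j ∈ Finset.Icc k n, c n j := by
    intro n k
    rcases le_or_gt k n with h | h
    · rw [Finset.Icc_eq_cons_Ioc h, Finset.sum_cons]
    · rw [Finset.Icc_eq_empty (by omega), Finset.Ioc_eq_empty (by omega)]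
      simp [hbound n k h]
  have key : ∀ n : ℕ,
      (∀ k, ((c n k : ℚ)) = coeff n (F * G ^ k * (1 - G))) ∧
      (∀ m, m ≤ n → coeff m E = 0) := by
    intro n
    induction n with
    | zero =>
      constructor
      · intro k
        cases k with
        | zero =>
          rw [h0, if_pos rfl, Nat.cast_one, coeff_zero_eq_constantCoeff, map_mul, map_mul,
            map_sub, hconstF, hG]
          simp
        | succ k =>
          rw [h0, if_neg (Nat.succ_ne_zero k), Nat.cast_zero,
            hzF (k + 1) 0 (1 - G) (Nat.succ_pos k)]
      · intro m hm
        interval_cases m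
        rw [hE, coeff_zero_eq_constantCoeff, map_sub, map_sub, map_sub, hconstF]
        simp
    | succ n IH =>
      obtain ⟨IHP, IHE⟩ := IH
      have tail : ∀ k, (∑ j ∈ Finset.Icc k n, ((c n j : ℚ))) = coeff n (F * G ^ k) := by
        intro k
        rcases le_or_gt k n with h | h
        · rw [Finset.sum_congr rfl (fun j _ => IHP j), ← map_sum, sumfac, mul_assoc,
            geom_Icc G k n h, mul_sub, map_sub,
            hzF' (n + 1) n (Nat.lt_succ_self n)]
          ring
        · rw [Finset.Icc_eq_empty (by omega)]
          have hz : coeff n (F * G ^ k) = 0 := by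
            have := hzF k n 1 h
            rwa [mul_one] at this
          rw [hz, Finset.sum_empty]
      have hc0 : ((c (n + 1) 0 : ℚ)) = (f n : ℚ) := by
        rw [hstep]
        rw [if_neg (by omega : ¬ (1 ≤ 0)), zero_add, icc n 0]
        push_cast
        rw [tail 0, pow_zero, mul_one, hcoeffF]
      have cval : ∀ k, ((c (n + 1) (k + 1) : ℚ)) =
          2 * coeff n (F * G ^ k * (1 - G)) + coeff n (F * G ^ (k + 1)) := by
        intro k
        rw [hstep, if_pos (Nat.succ_le_succ (Nat.zero_le k)), Nat.add_sub_cancel,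
          add_assoc, icc n (k + 1)]
        push_cast
        rw [IHP k, ← tail (k + 1)]
      have hEnew : coeff (n + 1) E = 0 := by
        have hfs : ((f (n + 1) : ℚ)) =
            3 * (f n : ℚ) + coeff n (F * G * (∑ i ∈ Finset.range (n + 1), G ^ i)) := by
          rw [hf (n + 1)]
          push_cast
          rw [Finset.sum_range_succ']
          have hsum : (∑ k ∈ Finset.range (n + 1), ((c (n + 1) (k + 1) : ℚ))) =
              2 * coeff n (F * (∑ i ∈ Finset.range (n + 1), G ^ i) * (1 - G)) +
              coeff n (F * G * (∑ i ∈ Finset.range (n + 1), G ^ i)) := by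
            rw [Finset.sum_congr rfl (fun k _ => cval k), Finset.sum_add_distrib]
            congr 1
            · rw [← Finset.mul_sum, ← map_sum, sumfac]
            · rw [← map_sum]
              congr 1
              rw [Finset.mul_sum]
              exact Finset.sum_congr rfl fun i _ => by rw [pow_succ]; ring
          rw [hsum, hc0]
          have hgeo : F * (∑ i ∈ Finset.range (n + 1), G ^ i) * (1 - G) =
              F - F * G ^ (n + 1) := by
            rw [mul_assoc, show (∑ i ∈ Finset.range (n + 1), G ^ i) * (1 - G) =
              -((∑ i ∈ Finset.range (n + 1), G ^ i) * (G - 1)) by ring, geom_sum_mul]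
            ring
          rw [hgeo, map_sub, hzF' (n + 1) n (Nat.lt_succ_self n), hcoeffF]
          ring
        have hDinv : (1 - G) * (1 - G)⁻¹ = 1 := by
          apply PowerSeries.mul_inv_cancel
          rw [hG]
          simp
        have hmain : coeff n (F * G * (∑ i ∈ Finset.range (n + 1), G ^ i)) =
            coeff n (2 * X * F ^ 2) := by
          have h1 : F * G * (∑ i ∈ Finset.range (n + 1), G ^ i) =
              (F * G - F * G ^ (n + 2)) * (1 - G)⁻¹ := by
            calc F * G * (∑ i ∈ Finset.range (n + 1), G ^ i)
                = F * G * (∑ i ∈ Finset.range (n + 1), G ^ i) * ((1 - G) * (1 - G)⁻¹) := by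
                  rw [hDinv, mul_one]
              _ = F * G * (-((∑ i ∈ Finset.range (n + 1), G ^ i) * (G - 1))) * (1 - G)⁻¹ := by
                  ring
              _ = (F * G - F * G ^ (n + 2)) * (1 - G)⁻¹ := by
                  rw [geom_sum_mul]; ring
          rw [h1]
          have h2 : (F * G - F * G ^ (n + 2)) * (1 - G)⁻¹ =
              2 * X * F ^ 2 + (-(2 * X * F * (1 - G)⁻¹)) * E - F * G ^ (n + 2) * (1 - G)⁻¹ := by
            have hFG : F * G = 2 * X * F ^ 2 * (1 - G) + (-(2 * X * F)) * E := by
              rw [hG, hE]; ring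
            calc (F * G - F * G ^ (n + 2)) * (1 - G)⁻¹
                = (2 * X * F ^ 2 * (1 - G) + (-(2 * X * F)) * E) * (1 - G)⁻¹
                  - F * G ^ (n + 2) * (1 - G)⁻¹ := by rw [← hFG]; ring
              _ = 2 * X * F ^ 2 * ((1 - G) * (1 - G)⁻¹) + (-(2 * X * F * (1 - G)⁻¹)) * E
                  - F * G ^ (n + 2) * (1 - G)⁻¹ := by ring
              _ = _ := by rw [hDinv]; ring
          rw [h2, map_sub, map_add, z1 _ _ _ IHE,
            hzF (n + 2) n ((1 - G)⁻¹) (by omega)]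
          ring
        have hEexp : coeff (n + 1) E =
            (f (n + 1) : ℚ) - 3 * (f n : ℚ) - coeff n (2 * X * F ^ 2) := by
          rw [hE, show F - 3 * X * F - 2 * X ^ 2 * F ^ 2 - 1 =
            F - X * (3 * F) - X * (2 * X * F ^ 2) - 1 by ring,
            map_sub, map_sub, map_sub, coeff_succ_X_mul, coeff_succ_X_mul, hcoeffF,
            coeff_one, if_neg (Nat.succ_ne_zero n)]
          have h3 : coeff n ((3 : ℚ⟦X⟧) * F) = 3 * (f n : ℚ) := by
            rw [show (3 : ℚ⟦X⟧) * F = F + F + F by ring, map_add, map_add, hcoeffF]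
            ring
          rw [h3]
          ring
        rw [hEexp, hfs, hmain]
        ring
      refine ⟨?_, ?_⟩
      · intro k
        cases k with
        | zero =>
          rw [hc0, pow_zero, mul_one]
          have hFD : F * (1 - G) = 1 + X * F + E := by
            rw [hG, hE]; ring
          rw [hFD, map_add, map_add, coeff_succ_X_mul, hEnew, hcoeffF, coeff_one,
            if_neg (Nat.succ_ne_zero n)]
          ring
        | succ k =>
          rw [cval k]
          have hser : F * G ^ (k + 1) * (1 - G) =
              X * (2 * (F * G ^ k * (1 - G)) + F * G ^ (k + 1) + (2 * X * F * G ^ k) * E) := by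
            rw [hG, hE]; ring
          rw [hser, coeff_succ_X_mul, map_add, map_add, coeff_two_mul',
            z1 (2 * X * F * G ^ k) E n IHE]
          ring
      · intro m hm
        rcases Nat.eq_or_lt_of_le hm with h | h
        · rw [h]; exact hEnew
        · exact IHE m (by omega)
  have hE0 : E = 0 := by
    ext n
    rw [(key n).2 n le_rfl, map_zero]
  have hFeq : F = 1 + 3 * X * F + 2 * X ^ 2 * F ^ 2 := by
    have h := hE0
    rw [hE] at h
    linear_combination h
  refine ⟨1 - 3 * X - 4 * X ^ 2 * F, ?_, ?_, by ring⟩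
  · linear_combination ((-8 : ℚ⟦X⟧) * X ^ 2) * hFeq
  · simp
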